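/- Let k ≥ 2 and let G ⊂ GL(2,ℝ) be the cyclic group of order k generated by the rotation of ℝ² through angle 2π/k. Then the ℝ-algebra of G-invariant polynomials in ℝ[x,y] is generated by p₁ = x² + y², p₂ = Re((x+iy)^k), and p₃ = Im((x+iy)^k). -/

import Mathlib

open Matrix MvPolynomial

noncomputable section

/-- Action of an invertible real matrix on a vector in `ℝ^d`. -/
def act {d : ℕ} (g : GL (Fin d) ℝ) (v : Fin d → ℝ) : Fin d → ℝ :=
  (g : Matrix (Fin d) (Fin d) ℝ).mulVec v

/-- Orbit of a vector under a subgroup of `GL (Fin d) ℝ`. -/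
def orbitOf {d : ℕ} (G : Subgroup (GL (Fin d) ℝ)) (v : Fin d → ℝ) : Set (Fin d → ℝ) :=
  {x | ∃ g ∈ G, act g v = x}

/-- A quasi-isomorphism: a linear isomorphism sending `G`-orbits to `H`-orbits,
whose inverse sends `H`-orbits to `G`-orbits. -/
def IsQuasiIso {d e : ℕ} (G : Subgroup (GL (Fin d) ℝ)) (H : Subgroup (GL (Fin e) ℝ))
    (L : (Fin d → ℝ) ≃ₗ[ℝ] (Fin e → ℝ)) : Prop :=
  (∀ v : Fin d → ℝ, ∃ w : Fin e → ℝ, ⇑L '' orbitOf G v = orbitOf H w) ∧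
  (∀ w : Fin e → ℝ, ∃ v : Fin d → ℝ, ⇑L.symm '' orbitOf H w = orbitOf G v)

/-- `P` is a `G`-invariant polynomial. -/
def IsInv {d : ℕ} (G : Subgroup (GL (Fin d) ℝ)) (P : MvPolynomial (Fin d) ℝ) : Prop :=
  ∀ g ∈ G, ∀ v : Fin d → ℝ, eval (act g v) P = eval v P

/-- The polynomial map `ℝ^d → ℝ^m` given by a family of polynomials. -/
def evalMap {d m : ℕ} (p : Fin m → MvPolynomial (Fin d) ℝ) (v : Fin d → ℝ) : Fin m → ℝ :=
  fun i => eval v (p i)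

/-- Real Zariski closure of a subset of `ℝ^m`: the common zero set of all real
polynomials vanishing identically on `S`. -/
def zarClosure {m : ℕ} (S : Set (Fin m → ℝ)) : Set (Fin m → ℝ) :=
  {y | ∀ P : MvPolynomial (Fin m) ℝ, (∀ s ∈ S, eval s P = 0) → eval y P = 0}

/-- `G` contains no reflections: every nonidentity element `g` has `rank (g - 1) ≥ 2`. -/
def NoReflections {d : ℕ} (G : Subgroup (GL (Fin d) ℝ)) : Prop :=
  ∀ g ∈ G, g ≠ 1 → 2 ≤ ((g : Matrix (Fin d) (Fin d) ℝ) - 1).rank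

/-- The rotation of `ℝ²` through angle `θ`, as an element of `GL (Fin 2) ℝ`. -/
def rotGL (θ : ℝ) : GL (Fin 2) ℝ :=
  Matrix.planeConformalMatrix (Real.cos θ) (Real.sin θ)
    (by nlinarith [Real.sin_sq_add_cos_sq θ])

namespace S18

abbrev ι : MvPolynomial (Fin 2) ℝ →+* MvPolynomial (Fin 2) ℂ := MvPolynomial.map (algebraMap ℝ ℂ)

def reP (p : MvPolynomial (Fin 2) ℂ) : MvPolynomial (Fin 2) ℝ :=
  ∑ m ∈ p.support, monomial m (p.coeff m).re

lemma coeff_reP (p : MvPolynomial (Fin 2) ℂ) (m : Fin 2 →₀ ℕ) :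
    coeff m (reP p) = (coeff m p).re := by
  rw [reP, coeff_sum]
  simp only [coeff_monomial]
  rw [Finset.sum_ite_eq' p.support m (fun d => (coeff d p).re)]
  split_ifs with h
  · rfl
  · rw [notMem_support_iff.mp h]; simp

def imP (p : MvPolynomial (Fin 2) ℂ) : MvPolynomial (Fin 2) ℝ := reP (C (-Complex.I) * p)

lemma coeff_imP (p : MvPolynomial (Fin 2) ℂ) (m : Fin 2 →₀ ℕ) :
    coeff m (imP p) = (coeff m p).im := by
  rw [imP, coeff_reP, coeff_C_mul]
  simp

lemma split (p : MvPolynomial (Fin 2) ℂ) :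
    p = ι (reP p) + C Complex.I * ι (imP p) := by
  apply MvPolynomial.ext
  intro m
  simp [coeff_map, coeff_reP, coeff_imP, coeff_C_mul]
  apply Complex.ext <;> simp

lemma evalR (A : MvPolynomial (Fin 2) ℝ) (v : Fin 2 → ℝ) :
    eval (fun i => ((v i : ℝ) : ℂ)) (ι A) = ((eval v A : ℝ) : ℂ) := by
  rw [eval_map]
  exact (eval₂_comp_left (Complex.ofRealHom) (RingHom.id ℝ) v A).symm

lemma realdense (S : MvPolynomial (Fin 2) ℂ)
    (h : ∀ v : Fin 2 → ℝ, eval (fun i => ((v i : ℝ) : ℂ)) S = 0) : S = 0 := by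
  have key : ∀ v : Fin 2 → ℝ, ((eval v (reP S) : ℝ) : ℂ) + Complex.I * ((eval v (imP S) : ℝ) : ℂ) = 0 := by
    intro v
    have := h v
    conv_lhs at this => rw [split S]
    rw [map_add, _root_.map_mul, eval_C, evalR, evalR] at this
    exact this
  have hre : reP S = 0 := by
    apply MvPolynomial.funext
    intro v
    have := key v
    rw [Complex.ext_iff] at this
    simpa using this.1
  have him : imP S = 0 := by
    apply MvPolynomial.funext
    intro v
    have := key v
    rw [Complex.ext_iff] at this
    simpa using this.2
  rw [split S, hre, him]; simp

lemma evalB {R : Type*} [CommSemiring R] (f : Fin 2 → MvPolynomial (Fin 2) R)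
    (x : Fin 2 → R) (p : MvPolynomial (Fin 2) R) :
    eval x (bind₁ f p) = eval (fun i => eval x (f i)) p :=
  eval₂Hom_bind₁ _ _ _ _

lemma act_rot (θ : ℝ) (v : Fin 2 → ℝ) :
    act (rotGL θ) v = ![Real.cos θ * v 0 - Real.sin θ * v 1,
                        Real.sin θ * v 0 + Real.cos θ * v 1] := by
  funext i
  fin_cases i <;>
    simp [act, rotGL, Matrix.mulVec, dotProduct, Fin.sum_univ_two] <;> ring

lemma act_mul {d : ℕ} (a b : GL (Fin d) ℝ) (v : Fin d → ℝ) :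
    act (a * b) v = act a (act b v) := by
  simp [act, Units.val_mul, mulVec_mulVec]

lemma act_one {d : ℕ} (v : Fin d → ℝ) : act (1 : GL (Fin d) ℝ) v = v := by
  simp [act]

def invG {d : ℕ} (P : MvPolynomial (Fin d) ℝ) : Subgroup (GL (Fin d) ℝ) where
  carrier := {g | ∀ v, eval (act g v) P = eval v P}
  one_mem' := by intro v; rw [act_one]
  mul_mem' := by
    intro a b ha hb v
    rw [act_mul, ha, hb]
  inv_mem' := by
    intro a ha v
    rw [← ha (act a⁻¹ v), ← act_mul, mul_inv_cancel, act_one]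

lemma inv_gen {d : ℕ} (g : GL (Fin d) ℝ) (P : MvPolynomial (Fin d) ℝ)
    (h : ∀ v, eval (act g v) P = eval v P) : IsInv (Subgroup.zpowers g) P := by
  have hle : Subgroup.zpowers g ≤ invG P := by
    rw [Subgroup.zpowers_le]; exact h
  exact fun g' hg' v => hle hg' v

lemma cmp_ri {a b c d : ℝ} (h : (a:ℂ) + Complex.I * b = (c:ℂ) + Complex.I * d) :
    a = c ∧ b = d := by
  constructor
  · have := congrArg Complex.re h; simpa using this
  · have := congrArg Complex.im h; simpa using this

lemma bind₁_scale_monomial (c : Fin 2 → ℂ) (d : Fin 2 →₀ ℕ) (r : ℂ) :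
    bind₁ (fun i => C (c i) * X i) (monomial d r)
      = monomial d ((∏ i, c i ^ d i) * r) := by
  rw [bind₁_monomial]
  have h1 : ∀ i ∈ d.support, (C (c i) * X i) ^ d i
      = C (c i ^ d i) * (X i ^ d i : MvPolynomial (Fin 2) ℂ) := by
    intro i _; rw [mul_pow, C_pow]
  rw [Finset.prod_congr rfl h1, Finset.prod_mul_distrib, ← map_prod]
  have h2 : (∏ i ∈ d.support, c i ^ d i) = ∏ i, c i ^ d i := by
    apply Finset.prod_subset (Finset.subset_univ _)
    intro i _ hi
    rw [Finsupp.notMem_support_iff.mp hi, pow_zero]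
  rw [h2, monomial_eq]
  rw [Finsupp.prod_fintype _ _ (fun i => pow_zero _), Fin.prod_univ_two, Fin.prod_univ_two]
  have h3 : (∏ x ∈ d.support, (X x : MvPolynomial (Fin 2) ℂ) ^ d x) = X 0 ^ d 0 * X 1 ^ d 1 := by
    rw [show (∏ x ∈ d.support, (X x : MvPolynomial (Fin 2) ℂ) ^ d x)
        = ∏ x, (X x : MvPolynomial (Fin 2) ℂ) ^ d x from
      Finset.prod_subset (Finset.subset_univ _) (fun i _ hi => by
        rw [Finsupp.notMem_support_iff.mp hi, pow_zero]), Fin.prod_univ_two]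
  rw [h3, ← mul_assoc, ← C_mul, mul_comm r]

lemma coeff_bind₁_scale (c : Fin 2 → ℂ) (p : MvPolynomial (Fin 2) ℂ) (m : Fin 2 →₀ ℕ) :
    coeff m (bind₁ (fun i => C (c i) * X i) p) = (∏ i, c i ^ m i) * coeff m p := by
  conv_lhs => rw [p.as_sum, map_sum]
  rw [coeff_sum]
  have h1 : ∀ d ∈ p.support, coeff m (bind₁ (fun i => C (c i) * X i) (monomial d (coeff d p)))
      = if d = m then (∏ i, c i ^ d i) * coeff d p else 0 := by
    intro d _
    rw [bind₁_scale_monomial, coeff_monomial]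
  rw [Finset.sum_congr rfl h1, Finset.sum_ite_eq' p.support m]
  split_ifs with h
  · rfl
  · rw [notMem_support_iff.mp h, mul_zero]

lemma mono_mem (k : ℕ) (hk : 2 ≤ k) (a b : ℕ) (hd : (k:ℤ) ∣ (a:ℤ) - b) :
    (X 0:MvPolynomial (Fin 2) ℂ)^a * X 1^b
      ∈ Algebra.adjoin ℂ ({X 0 * X 1, X 0 ^ k, X 1 ^ k} : Set (MvPolynomial (Fin 2) ℂ)) := by
  have hx01 : (X 0 * X 1 : MvPolynomial (Fin 2) ℂ) ∈ Algebra.adjoin ℂ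
      ({X 0 * X 1, X 0 ^ k, X 1 ^ k} : Set (MvPolynomial (Fin 2) ℂ)) :=
    Algebra.subset_adjoin (by simp)
  have hx0 : (X 0 ^ k : MvPolynomial (Fin 2) ℂ) ∈ Algebra.adjoin ℂ
      ({X 0 * X 1, X 0 ^ k, X 1 ^ k} : Set (MvPolynomial (Fin 2) ℂ)) :=
    Algebra.subset_adjoin (by simp)
  have hx1 : (X 1 ^ k : MvPolynomial (Fin 2) ℂ) ∈ Algebra.adjoin ℂ
      ({X 0 * X 1, X 0 ^ k, X 1 ^ k} : Set (MvPolynomial (Fin 2) ℂ)) :=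
    Algebra.subset_adjoin (by simp)
  rcases le_total b a with hba | hab
  · obtain ⟨t, ht⟩ := hd
    have ht0 : 0 ≤ t := by
      by_contra hlt
      push_neg at hlt
      nlinarith [ht, (by exact_mod_cast hba : (b:ℤ) ≤ a), (by exact_mod_cast hk : (2:ℤ) ≤ k)]
    lift t to ℕ using ht0 with tn
    have hab' : a = b + k * tn := by
      have h' : (a:ℤ) = b + k * tn := by linarith [ht]
      exact_mod_cast h'
    subst hab'
    have hEq : (X 0 : MvPolynomial (Fin 2) ℂ)^(b + k*tn) * X 1 ^ b
        = (X 0 * X 1)^b * (X 0^k)^tn := by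
      rw [pow_add, pow_mul, mul_pow]; ring
    rw [hEq]
    exact mul_mem (pow_mem hx01 b) (pow_mem hx0 tn)
  · obtain ⟨t, ht⟩ := hd
    have ht0 : t ≤ 0 := by
      by_contra hlt
      push_neg at hlt
      nlinarith [ht, (by exact_mod_cast hab : (a:ℤ) ≤ b), (by exact_mod_cast hk : (2:ℤ) ≤ k)]
    lift -t to ℕ using (by linarith : (0:ℤ) ≤ -t) with tn htn
    have hab' : b = a + k * tn := by
      have h' : (b:ℤ) = a + k * tn := by
        have : (tn : ℤ) = -t := htn
        rw [this]; linarith [ht]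
      exact_mod_cast h'
    subst hab'
    have hEq : (X 0 : MvPolynomial (Fin 2) ℂ)^a * X 1 ^ (a + k*tn)
        = (X 0 * X 1)^a * (X 1^k)^tn := by
      rw [pow_add, pow_mul, mul_pow]; ring
    rw [hEq]
    exact mul_mem (pow_mem hx01 a) (pow_mem hx1 tn)

lemma supported_mem (k : ℕ) (hk : 2 ≤ k) (p : MvPolynomial (Fin 2) ℂ)
    (h : ∀ m ∈ p.support, (k:ℤ) ∣ (m 0 : ℤ) - m 1) :
    p ∈ Algebra.adjoin ℂ ({X 0 * X 1, X 0 ^ k, X 1 ^ k} : Set (MvPolynomial (Fin 2) ℂ)) := by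
  rw [p.as_sum]
  apply Subalgebra.sum_mem
  intro m hm
  have hmono : (monomial m (coeff m p) : MvPolynomial (Fin 2) ℂ)
      = C (coeff m p) * (X 0 ^ m 0 * X 1 ^ m 1) := by
    rw [monomial_eq, Finsupp.prod_fintype _ _ (fun i => pow_zero _), Fin.prod_univ_two]
  rw [hmono]
  refine mul_mem ?_ (mono_mem k hk _ _ (h m hm))
  rw [← MvPolynomial.algebraMap_eq]
  exact Subalgebra.algebraMap_mem _ _

lemma reP_ι (q : MvPolynomial (Fin 2) ℝ) : reP (ι q) = q := by
  apply MvPolynomial.ext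
  intro m
  rw [coeff_reP, coeff_map]
  simp

lemma imP_ι (q : MvPolynomial (Fin 2) ℝ) : imP (ι q) = 0 := by
  apply MvPolynomial.ext
  intro m
  rw [coeff_imP, coeff_map]
  simp

lemma reP_add (p q : MvPolynomial (Fin 2) ℂ) : reP (p + q) = reP p + reP q := by
  apply MvPolynomial.ext; intro m
  simp [coeff_reP, coeff_add]

lemma imP_add (p q : MvPolynomial (Fin 2) ℂ) : imP (p + q) = imP p + imP q := by
  apply MvPolynomial.ext; intro m
  simp [coeff_imP, coeff_add]

lemma reP_zero : reP 0 = 0 := by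
  apply MvPolynomial.ext; intro m; simp [coeff_reP]

lemma imP_zero : imP 0 = 0 := by
  apply MvPolynomial.ext; intro m; simp [coeff_imP]

lemma reP_smul (c : ℂ) (p : MvPolynomial (Fin 2) ℂ) :
    reP (c • p) = c.re • reP p - c.im • imP p := by
  apply MvPolynomial.ext; intro m
  simp [coeff_reP, coeff_imP, coeff_smul, coeff_sub, Complex.mul_re, smul_eq_mul]

lemma imP_smul (c : ℂ) (p : MvPolynomial (Fin 2) ℂ) :
    imP (c • p) = c.re • imP p + c.im • reP p := by
  apply MvPolynomial.ext; intro m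
  simp [coeff_reP, coeff_imP, coeff_smul, coeff_add, Complex.mul_im, smul_eq_mul]

lemma descent (S : Set (MvPolynomial (Fin 2) ℝ)) (P : MvPolynomial (Fin 2) ℝ)
    (h : ι P ∈ Algebra.adjoin ℂ (⇑ι '' S)) : P ∈ Algebra.adjoin ℝ S := by
  have hsp : ι P ∈ Submodule.span ℂ (↑(Submonoid.closure (⇑ι '' S)) : Set (MvPolynomial (Fin 2) ℂ)) := by
    rw [← Algebra.adjoin_eq_span]; exact h
  set A := Algebra.adjoin ℝ S with hA
  have main : ∀ Q, Q ∈ Submodule.span ℂ (↑(Submonoid.closure (⇑ι '' S)) : Set (MvPolynomial (Fin 2) ℂ)) →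
      reP Q ∈ A ∧ imP Q ∈ A := by
    intro Q hQ
    induction hQ using Submodule.span_induction with
    | mem x hx =>
      have hx' : x ∈ Submonoid.map (ι : MvPolynomial (Fin 2) ℝ →* MvPolynomial (Fin 2) ℂ)
          (Submonoid.closure S) := by
        rw [MonoidHom.map_mclosure]; exact hx
      obtain ⟨q, hq, rfl⟩ := hx'
      have hqA : q ∈ A := by
        have hle : Submonoid.closure S ≤ A.toSubmonoid := by
          rw [Submonoid.closure_le]; exact Algebra.subset_adjoin
        exact hle hq
      constructor
      · show reP (ι q) ∈ A
        rwa [reP_ι]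
      · show imP (ι q) ∈ A
        rw [imP_ι]; exact zero_mem A
    | zero => rw [reP_zero, imP_zero]; exact ⟨zero_mem A, zero_mem A⟩
    | add x y hx hy ihx ihy =>
      rw [reP_add, imP_add]
      exact ⟨add_mem ihx.1 ihy.1, add_mem ihx.2 ihy.2⟩
    | smul c x hx ih =>
      rw [reP_smul, imP_smul]
      exact ⟨sub_mem (SMulMemClass.smul_mem _ ih.1) (SMulMemClass.smul_mem _ ih.2),
        add_mem (SMulMemClass.smul_mem _ ih.2) (SMulMemClass.smul_mem _ ih.1)⟩
  have := (main (ι P) hsp).1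
  rwa [reP_ι] at this


section Main
variable (k : ℕ) (hk : 2 ≤ k) (p₂ p₃ : MvPolynomial (Fin 2) ℝ)
  (h23 : ∀ v : Fin 2 → ℝ, ((eval v p₂ : ℝ) : ℂ) + Complex.I * ((eval v p₃ : ℝ) : ℂ)
      = ((v 0 : ℂ) + Complex.I * (v 1 : ℂ)) ^ k)

include hk h23 in
lemma gen_inv_p23 :
    (∀ v, eval (act (rotGL (2 * Real.pi / k)) v) p₂ = eval v p₂) ∧
    (∀ v, eval (act (rotGL (2 * Real.pi / k)) v) p₃ = eval v p₃) := by
  have hk0 : (k : ℝ) ≠ 0 := by positivity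
  set θ := 2 * Real.pi / k with hθ
  have he : ((Real.cos θ : ℂ) + Complex.I * (Real.sin θ : ℂ)) ^ k = 1 := by
    have h1 : ((Real.cos θ : ℂ) + Complex.I * (Real.sin θ : ℂ)) = Complex.exp (θ * Complex.I) := by
      rw [Complex.exp_mul_I, ← Complex.ofReal_cos, ← Complex.ofReal_sin]; ring
    rw [h1, ← Complex.exp_nat_mul]
    have h2 : ((k : ℂ) * ((θ:ℂ) * Complex.I)) = 2 * Real.pi * Complex.I := by
      have hk0c : (k : ℂ) ≠ 0 := by exact_mod_cast hk0
      rw [hθ]; push_cast; field_simp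
    rw [h2, Complex.exp_two_pi_mul_I]
  have key : ∀ v : Fin 2 → ℝ,
      eval (act (rotGL θ) v) p₂ = eval v p₂ ∧ eval (act (rotGL θ) v) p₃ = eval v p₃ := by
    intro v
    apply cmp_ri
    rw [h23, h23, act_rot]
    have hpt : ((Real.cos θ * v 0 - Real.sin θ * v 1 : ℝ) : ℂ)
        + Complex.I * ((Real.sin θ * v 0 + Real.cos θ * v 1 : ℝ) : ℂ)
        = ((Real.cos θ : ℂ) + Complex.I * (Real.sin θ : ℂ)) * (((v 0 : ℝ) : ℂ) + Complex.I * ((v 1 : ℝ):ℂ)) := by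
      simp only [Complex.ofReal_sub, Complex.ofReal_add, Complex.ofReal_mul]
      linear_combination (-(Real.sin θ : ℂ) * ((v 1 : ℝ):ℂ)) * Complex.I_mul_I
    simp only [Matrix.cons_val_zero, Matrix.cons_val_one, Matrix.head_cons]
    rw [hpt, mul_pow, he, one_mul]
  exact ⟨fun v => (key v).1, fun v => (key v).2⟩

lemma gen_inv_p1 (θ : ℝ) :
    ∀ v, eval (act (rotGL θ) v) (X 0 ^ 2 + X 1 ^ 2 : MvPolynomial (Fin 2) ℝ)
      = eval v (X 0 ^ 2 + X 1 ^ 2) := by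
  intro v
  rw [act_rot]
  simp only [map_add, map_pow, eval_X, Matrix.cons_val_zero, Matrix.cons_val_one, Matrix.head_cons]
  linear_combination (v 0 ^ 2 + v 1 ^ 2) * Real.sin_sq_add_cos_sq θ

end Main
end S18

/-- the invariants of the cyclic rotation group of order `k`
acting on `ℝ²` are generated by `x² + y²`, `Re((x+iy)^k)` and `Im((x+iy)^k)`. -/
theorem stmt_18 (k : ℕ) (hk : 2 ≤ k) (p₂ p₃ : MvPolynomial (Fin 2) ℝ)
    (h23 : ∀ v : Fin 2 → ℝ, ((eval v p₂ : ℝ) : ℂ) + Complex.I * ((eval v p₃ : ℝ) : ℂ)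
      = ((v 0 : ℂ) + Complex.I * (v 1 : ℂ)) ^ k) :
    ∀ P : MvPolynomial (Fin 2) ℝ,
      IsInv (Subgroup.zpowers (rotGL (2 * Real.pi / k))) P ↔
        P ∈ Algebra.adjoin ℝ
          ({X 0 ^ 2 + X 1 ^ 2, p₂, p₃} : Set (MvPolynomial (Fin 2) ℝ)) := by
  intro P
  have hk0 : k ≠ 0 := by omega
  constructor
  · intro hP
    set θ : ℝ := 2 * Real.pi / k with hθ
    have hPg : ∀ v, eval (act (rotGL θ) v) P = eval v P :=
      fun v => hP (rotGL θ) (Subgroup.mem_zpowers _) v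
    set cs : ℂ := (Real.cos θ : ℂ) with hcs
    set ss : ℂ := (Real.sin θ : ℂ) with hss
    set Q : MvPolynomial (Fin 2) ℂ := S18.ι P with hQ
    set f : Fin 2 → MvPolynomial (Fin 2) ℂ :=
      ![C cs * X 0 - C ss * X 1, C ss * X 0 + C cs * X 1] with hf
    have hQrot : bind₁ f Q = Q := by
      have hz : bind₁ f Q - Q = 0 := by
        apply S18.realdense
        intro v
        rw [map_sub, S18.evalB]
        have hpt : (fun i => eval (fun i => ((v i : ℝ):ℂ)) (f i))
            = fun i => ((act (rotGL θ) v i : ℝ) : ℂ) := by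
          funext i
          fin_cases i <;>
            · simp [hf, S18.act_rot]
              rw [hcs, hss]
              push_cast
              ring
        rw [hpt, hQ, S18.evalR, S18.evalR, hPg v, sub_self]
      exact sub_eq_zero.mp hz
    have hQrot' : ∀ x : Fin 2 → ℂ, eval (fun i => eval x (f i)) Q = eval x Q := by
      intro x
      conv_rhs => rw [← hQrot]
      rw [S18.evalB]
    set ζ : ℂ := Complex.exp (2 * Real.pi * Complex.I / k) with hζdef
    have hprim : IsPrimitiveRoot ζ k := Complex.isPrimitiveRoot_exp k hk0
    have hζne : ζ ≠ 0 := Complex.exp_ne_zero _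
    have hζcs : ζ = cs + ss * Complex.I := by
      rw [hζdef, hcs, hss, hθ]
      rw [show (2 * Real.pi * Complex.I / k) = ((2*Real.pi/k : ℝ):ℂ) * Complex.I by push_cast; ring]
      rw [Complex.exp_mul_I, ← Complex.ofReal_cos, ← Complex.ofReal_sin]
    have hone : ss^2 + cs^2 = 1 := by
      rw [hcs, hss]; exact_mod_cast Real.sin_sq_add_cos_sq θ
    have hζinv : ζ⁻¹ = cs - ss * Complex.I := by
      apply inv_eq_of_mul_eq_one_right
      rw [hζcs]
      linear_combination hone - ss^2 * Complex.I_mul_I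
    set uf : Fin 2 → MvPolynomial (Fin 2) ℂ :=
      ![C (1/2 : ℂ) * (X 0 + X 1), C (Complex.I/2) * (X 1 - X 0)] with huf
    set UQ := bind₁ uf Q with hUQ
    set cvec : Fin 2 → ℂ := ![ζ, ζ⁻¹] with hcvec
    have hRζ : bind₁ (fun i => C (cvec i) * X i) UQ = UQ := by
      apply MvPolynomial.funext
      intro u
      rw [S18.evalB, hUQ, S18.evalB, S18.evalB]
      have golf : (fun i => eval (fun j => eval u (C (cvec j) * X j)) (uf i))
          = fun i => eval (fun j => eval u (uf j)) (f i) := by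
        funext i
        fin_cases i
        · simp [huf, hcvec, hf]
          linear_combination (u 0 / 2) * hζcs + (u 1 / 2) * hζinv
        · simp [huf, hcvec, hf]
          linear_combination (-(Complex.I) * u 0/2) * hζcs + (Complex.I * u 1/2) * hζinv
            - (ss * (u 0 + u 1)/2) * Complex.I_mul_I
      rw [golf, hQrot']
    have hsupp : ∀ m ∈ UQ.support, (k:ℤ) ∣ (m 0 : ℤ) - m 1 := by
      intro m hm
      have h1 := congrArg (coeff m) hRζ
      rw [S18.coeff_bind₁_scale] at h1
      have hc : coeff m UQ ≠ 0 := mem_support_iff.mp hm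
      have h2 : (∏ i, cvec i ^ m i) = 1 := by
        apply mul_right_cancel₀ hc
        rw [h1, one_mul]
      rw [hcvec, Fin.prod_univ_two] at h2
      simp only [Matrix.cons_val_zero, Matrix.cons_val_one, Matrix.head_cons] at h2
      have h3 : ζ ^ ((m 0 : ℤ) - (m 1 : ℤ)) = 1 := by
        rw [zpow_sub₀ hζne, zpow_natCast, zpow_natCast]
        rw [inv_pow] at h2
        rw [div_eq_one_iff_eq (pow_ne_zero _ hζne)]
        exact (mul_inv_eq_one₀ (pow_ne_zero _ hζne)).mp h2
      exact (hprim.zpow_eq_one_iff_dvd _).mp h3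
    have hUQmem : UQ ∈ Algebra.adjoin ℂ
        ({X 0 * X 1, X 0 ^ k, X 1 ^ k} : Set (MvPolynomial (Fin 2) ℂ)) :=
      S18.supported_mem k hk UQ hsupp
    set vf : Fin 2 → MvPolynomial (Fin 2) ℂ :=
      ![X 0 + C Complex.I * X 1, X 0 - C Complex.I * X 1] with hvf
    have hVU : bind₁ vf UQ = Q := by
      apply MvPolynomial.funext
      intro u
      rw [S18.evalB, hUQ, S18.evalB]
      have hxu : (fun i => eval (fun j => eval u (vf j)) (uf i)) = u := by
        funext i
        fin_cases i
        · simp [huf, hvf]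
          ring
        · simp [huf, hvf]
          linear_combination (-(u 1)) * Complex.I_mul_I
      rw [hxu]
    have hQmem : Q ∈ Algebra.adjoin ℂ
        (⇑(bind₁ vf : MvPolynomial (Fin 2) ℂ →ₐ[ℂ] MvPolynomial (Fin 2) ℂ) ''
          ({X 0 * X 1, X 0 ^ k, X 1 ^ k} : Set (MvPolynomial (Fin 2) ℂ))) := by
      rw [← AlgHom.map_adjoin]
      exact Subalgebra.mem_map.mpr ⟨UQ, hUQmem, hVU⟩
    have hid1 : bind₁ vf (X 0 * X 1) = S18.ι (X 0^2 + X 1^2) := by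
      apply MvPolynomial.funext
      intro u
      rw [S18.evalB]
      simp [hvf]
      linear_combination (-(u 1)^2) * Complex.I_mul_I
    have hid2 : bind₁ vf (X 0 ^ k) = S18.ι p₂ + C Complex.I * S18.ι p₃ := by
      apply eq_of_sub_eq_zero
      apply S18.realdense
      intro v
      rw [map_sub, S18.evalB, map_add, _root_.map_mul, eval_C, S18.evalR, S18.evalR]
      rw [map_pow, eval_X]
      simp only [hvf, Matrix.cons_val_zero, map_add, _root_.map_mul, eval_C, eval_X]
      rw [← h23 v]
      ring
    have hid3 : bind₁ vf (X 1 ^ k) = S18.ι p₂ - C Complex.I * S18.ι p₃ := by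
      apply eq_of_sub_eq_zero
      apply S18.realdense
      intro v
      rw [map_sub, S18.evalB, map_sub, _root_.map_mul, eval_C, S18.evalR, S18.evalR]
      rw [map_pow, eval_X]
      simp only [hvf, Matrix.cons_val_one, Matrix.cons_val_zero, Matrix.head_cons, map_sub, _root_.map_mul, eval_C, eval_X]
      have hconj := congrArg (starRingEnd ℂ) (h23 v)
      simp only [map_add, _root_.map_mul, map_pow, Complex.conj_ofReal, Complex.conj_I] at hconj
      linear_combination -hconj
    have hQfin : Q ∈ Algebra.adjoin ℂ
        (⇑S18.ι '' ({X 0 ^ 2 + X 1 ^ 2, p₂, p₃} : Set (MvPolynomial (Fin 2) ℝ))) := by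
      rw [Set.image_insert_eq, Set.image_insert_eq, Set.image_singleton, hid1, hid2, hid3] at hQmem
      have hle : Algebra.adjoin ℂ
          ({S18.ι (X 0^2 + X 1^2), S18.ι p₂ + C Complex.I * S18.ι p₃,
            S18.ι p₂ - C Complex.I * S18.ι p₃} : Set (MvPolynomial (Fin 2) ℂ)) ≤
          Algebra.adjoin ℂ
            (⇑S18.ι '' ({X 0 ^ 2 + X 1 ^ 2, p₂, p₃} : Set (MvPolynomial (Fin 2) ℝ))) := by
        apply Algebra.adjoin_le
        intro x hx
        have hp1 : S18.ι (X 0^2 + X 1^2) ∈ Algebra.adjoin ℂ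
            (⇑S18.ι '' ({X 0 ^ 2 + X 1 ^ 2, p₂, p₃} : Set (MvPolynomial (Fin 2) ℝ))) :=
          Algebra.subset_adjoin (Set.mem_image_of_mem _ (by simp))
        have hp2 : S18.ι p₂ ∈ Algebra.adjoin ℂ
            (⇑S18.ι '' ({X 0 ^ 2 + X 1 ^ 2, p₂, p₃} : Set (MvPolynomial (Fin 2) ℝ))) :=
          Algebra.subset_adjoin (Set.mem_image_of_mem _ (by simp))
        have hp3 : S18.ι p₃ ∈ Algebra.adjoin ℂ
            (⇑S18.ι '' ({X 0 ^ 2 + X 1 ^ 2, p₂, p₃} : Set (MvPolynomial (Fin 2) ℝ))) :=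
          Algebra.subset_adjoin (Set.mem_image_of_mem _ (by simp))
        have hCI : (C Complex.I : MvPolynomial (Fin 2) ℂ) ∈ Algebra.adjoin ℂ
            (⇑S18.ι '' ({X 0 ^ 2 + X 1 ^ 2, p₂, p₃} : Set (MvPolynomial (Fin 2) ℝ))) := by
          rw [← MvPolynomial.algebraMap_eq]
          exact Subalgebra.algebraMap_mem _ _
        simp only [Set.mem_insert_iff, Set.mem_singleton_iff] at hx
        rcases hx with rfl | rfl | rfl
        · exact hp1
        · exact add_mem hp2 (mul_mem hCI hp3)
        · exact sub_mem hp2 (mul_mem hCI hp3)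
      exact hle hQmem
    exact S18.descent _ P hQfin
  · intro hP
    have hgen : ∀ q ∈ ({X 0 ^ 2 + X 1 ^ 2, p₂, p₃} : Set (MvPolynomial (Fin 2) ℝ)),
        IsInv (Subgroup.zpowers (rotGL (2 * Real.pi / k))) q := by
      intro q hq
      simp only [Set.mem_insert_iff, Set.mem_singleton_iff] at hq
      rcases hq with hq | hq | hq
      · rw [hq]; exact S18.inv_gen _ _ (S18.gen_inv_p1 _)
      · rw [hq]; exact S18.inv_gen _ _ (S18.gen_inv_p23 k hk p₂ p₃ h23).1
      · rw [hq]; exact S18.inv_gen _ _ (S18.gen_inv_p23 k hk p₂ p₃ h23).2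
    induction hP using Algebra.adjoin_induction with
    | mem x hx => exact hgen x hx
    | algebraMap r =>
      intro g hg v
      simp [MvPolynomial.algebraMap_eq]
    | add x y hx hy ihx ihy =>
      intro g hg v
      simp [ihx g hg v, ihy g hg v]
    | mul x y hx hy ihx ihy =>
      intro g hg v
      simp [ihx g hg v, ihy g hg v]
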